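/- Proposition C.1 (sharp identification in GLM*): Fix an agent i ∈ 𝒜 and a vector v ∈ Δ(X). There exist, for each N ∈ 𝒩_i, reals π_i^N(j) ≥ 0 (j ∈ N) with Σ_{j∈N} π_i^N(j) = 1 such that p_i^N = π_i^N(i)·v + Σ_{j∈N∖{i}} π_i^N(j)·p_j^N for every N ∈ 𝒩_i, if and only if v ∈ ⋂_{N∈𝒩_i^{ext}} co⁻¹(Δ(p^N), p_i^N) (where, if 𝒩_i^{ext} = ∅, every v ∈ Δ(X) qualifies). Equivalently, the sharp identified set for v_i in GLM* equals ⋂_{N∈𝒩_i^{ext}} co⁻¹(Δ(p^N), p_i^N). -/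

import Mathlib

open Finset
open scoped Classical

noncomputable section

/-- The simplex Δ(X) of probability vectors on a finite set X. -/
def simplex (X : Type*) [Fintype X] : Set (X → ℝ) :=
  {v | (∀ x, 0 ≤ v x) ∧ (∑ x, v x) = 1}

/-- The inverse cone co⁻¹(Δ(p^N), p_i^N). -/
def invCone {X A : Type*} [Fintype X] [DecidableEq A]
    (p : Finset A → A → X → ℝ) (N : Finset A) (i : A) : Set (X → ℝ) :=
  {v | v ∈ simplex X ∧ ∃ γ : A → ℝ, (∀ j ∈ N.erase i, γ j ≤ 0) ∧
    (∑ j ∈ N, γ j) = 1 ∧ v = ∑ j ∈ N, γ j • p N j}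

/-- 𝒩_i^{ext}: the groups containing i in which agent i's choice is not in the convex
hull of the other agents' choices. -/
def Next {X A : Type*} [Fintype X] [DecidableEq A]
    (𝒩 : Finset (Finset A)) (p : Finset A → A → X → ℝ) (i : A) : Finset (Finset A) :=
  𝒩.filter (fun N => i ∈ N ∧ p N i ∉ convexHull ℝ (p N '' ↑(N.erase i)))

lemma solve_smul {M : Type*} [AddCommGroup M] [Module ℝ M] {ι : Type*} (s : Finset ι)
    (q : ι → M) (w : ι → ℝ) (c : ℝ) (hc : c ≠ 0) (u t : M)
    (h : u = c • t + ∑ j ∈ s, w j • q j) :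
    t = c⁻¹ • u + ∑ j ∈ s, (-(w j) * c⁻¹) • q j := by
  have h2 : ∑ j ∈ s, (-(w j) * c⁻¹) • q j = (-c⁻¹) • ∑ j ∈ s, w j • q j := by
    rw [Finset.smul_sum]
    refine Finset.sum_congr rfl fun j _ => ?_
    rw [smul_smul]; ring_nf
  rw [h2, h, smul_add, smul_smul, inv_mul_cancel₀ hc, one_smul]
  module

/-- Proposition C.1: the sharp identified set for agent i's ideal point in GLM* is
⋂_{N ∈ 𝒩_i^{ext}} co⁻¹(Δ(p^N), p_i^N). -/
theorem glmstar_sharp_identification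
    {X A : Type*} [Fintype X] [Fintype A] [DecidableEq A]
    (hX : 2 ≤ Fintype.card X) (hA : 2 ≤ Fintype.card A)
    (𝒩 : Finset (Finset A)) (h𝒩 : 𝒩.Nonempty) (h𝒩' : ∀ N ∈ 𝒩, N.Nonempty)
    (p : Finset A → A → X → ℝ) (hp : ∀ N ∈ 𝒩, ∀ i ∈ N, p N i ∈ simplex X)
    (i : A) (v : X → ℝ) (hv : v ∈ simplex X) :
    (∀ N ∈ 𝒩.filter (fun N => i ∈ N), ∃ π : A → ℝ,
        (∀ j ∈ N, 0 ≤ π j) ∧ (∑ j ∈ N, π j) = 1 ∧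
        p N i = π i • v + ∑ j ∈ N.erase i, π j • p N j) ↔
      v ∈ ⋂ N ∈ Next 𝒩 p i, invCone p N i := by
  constructor
  · intro h
    refine Set.mem_iInter₂.mpr fun N hN => ?_
    simp only [Next, Finset.mem_filter] at hN
    obtain ⟨hN𝒩, hiN, hext⟩ := hN
    obtain ⟨π, hπ0, hπ1, hπeq⟩ := h N (Finset.mem_filter.mpr ⟨hN𝒩, hiN⟩)
    have hsum_split : π i + ∑ j ∈ N.erase i, π j = 1 := by
      rw [Finset.add_sum_erase _ _ hiN]; exact hπ1
    have hπi_pos : 0 < π i := by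
      rcases (hπ0 i hiN).lt_or_eq with h' | h'
      · exact h'
      · exfalso
        apply hext
        have hsum1 : ∑ j ∈ N.erase i, π j = 1 := by linarith
        have hc : p N i = (N.erase i).centerMass π (p N) := by
          rw [Finset.centerMass_eq_of_sum_1 _ _ hsum1, hπeq, ← h']
          simp
        rw [hc]
        exact Finset.centerMass_mem_convexHull _
          (fun j hj => hπ0 j (Finset.mem_of_mem_erase hj))
          (by rw [hsum1]; norm_num)
          (fun j hj => Set.mem_image_of_mem _ (Finset.mem_coe.mpr hj))
    have hπi : π i ≠ 0 := ne_of_gt hπi_pos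
    refine ⟨hv, fun j => if j = i then (π i)⁻¹ else -(π j) * (π i)⁻¹, ?_, ?_, ?_⟩
    · intro j hj
      beta_reduce
      rw [if_neg (Finset.ne_of_mem_erase hj)]
      have := hπ0 j (Finset.mem_of_mem_erase hj)
      have : 0 ≤ (π i)⁻¹ := by positivity
      nlinarith [hπ0 j (Finset.mem_of_mem_erase hj)]
    · rw [← Finset.add_sum_erase _ _ hiN, if_pos rfl,
        Finset.sum_congr rfl (fun j hj => if_neg (Finset.ne_of_mem_erase hj))]
      have : ∑ j ∈ N.erase i, -(π j) * (π i)⁻¹ = -(∑ j ∈ N.erase i, π j) * (π i)⁻¹ := by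
        rw [← Finset.sum_mul, ← Finset.sum_neg_distrib]
      rw [this]
      have h1 : ∑ j ∈ N.erase i, π j = 1 - π i := by linarith
      rw [h1]; field_simp; ring
    · beta_reduce
      rw [← Finset.add_sum_erase _ _ hiN, if_pos rfl,
        Finset.sum_congr rfl (fun j hj => by
          rw [if_neg (Finset.ne_of_mem_erase hj)] :
          ∀ j ∈ N.erase i, (if j = i then (π i)⁻¹ else -(π j) * (π i)⁻¹) • p N j
            = (-(π j) * (π i)⁻¹) • p N j)]
      exact solve_smul (N.erase i) (p N) π (π i) hπi (p N i) v hπeq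
  · intro h N hN
    obtain ⟨hN𝒩, hiN⟩ := Finset.mem_filter.mp hN
    by_cases hext : p N i ∈ convexHull ℝ (p N '' ↑(N.erase i))
    · -- p N i is a convex combination of the others; take π i = 0
      rw [← Finset.coe_image, Finset.mem_convexHull] at hext
      obtain ⟨w, hw0, hw1, hwc⟩ := hext
      set T := (N.erase i).image (p N) with hT
      set g : (X → ℝ) → A := fun y =>
        if h : ∃ j ∈ N.erase i, p N j = y then h.choose else i with hg
      have hgmem : ∀ y ∈ T, g y ∈ N.erase i ∧ p N (g y) = y := by
        intro y hy
        obtain ⟨j, hj, hjy⟩ := Finset.mem_image.mp hy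
        have hex : ∃ j ∈ N.erase i, p N j = y := ⟨j, hj, hjy⟩
        simp only [hg, dif_pos hex]
        exact ⟨hex.choose_spec.1, hex.choose_spec.2⟩
      have hmaps : ∀ y ∈ T, g y ∈ N.erase i := fun y hy => (hgmem y hy).1
      refine ⟨fun j => ∑ y ∈ T.filter (fun y => g y = j), w y, ?_, ?_, ?_⟩
      · intro j _
        exact Finset.sum_nonneg fun y hy => hw0 y (Finset.mem_of_mem_filter y hy)
      · rw [Finset.sum_fiberwise_of_maps_to (fun y hy =>
          Finset.mem_of_mem_erase (hmaps y hy))]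
        exact hw1
      · have hπi0 : ∑ y ∈ T.filter (fun y => g y = i), w y = 0 := by
          apply Finset.sum_eq_zero
          intro y hy
          obtain ⟨hyT, hgy⟩ := Finset.mem_filter.mp hy
          exact absurd (hgy ▸ hmaps y hyT) (Finset.notMem_erase i N)
        beta_reduce
        rw [hπi0, zero_smul, zero_add]
        have key : ∑ j ∈ N.erase i, (∑ y ∈ T.filter (fun y => g y = j), w y) • p N j
            = ∑ y ∈ T, w y • y := by
          rw [← Finset.sum_fiberwise_of_maps_to hmaps (fun y => w y • y)]
          refine Finset.sum_congr rfl fun j _ => ?_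
          rw [Finset.sum_smul]
          refine Finset.sum_congr rfl fun y hy => ?_
          obtain ⟨hyT, hgy⟩ := Finset.mem_filter.mp hy
          rw [← hgy, (hgmem y hyT).2]
        rw [key, ← hwc, Finset.centerMass_eq_of_sum_1 _ id hw1]
        simp only [id_eq]
    · -- N ∈ Next, use the invCone membership
      have hNext : N ∈ Next 𝒩 p i := by
        simp only [Next, Finset.mem_filter]
        exact ⟨hN𝒩, hiN, hext⟩
      obtain ⟨-, γ, hγ0, hγ1, hγeq⟩ := Set.mem_iInter₂.mp h N hNext
      have hsum_split : γ i + ∑ j ∈ N.erase i, γ j = 1 := by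
        rw [Finset.add_sum_erase _ _ hiN]; exact hγ1
      have hγi_pos : 0 < γ i := by
        have : ∑ j ∈ N.erase i, γ j ≤ 0 :=
          Finset.sum_nonpos fun j hj => hγ0 j hj
        linarith
      have hγi : γ i ≠ 0 := ne_of_gt hγi_pos
      have hγeq' : v = γ i • p N i + ∑ j ∈ N.erase i, γ j • p N j := by
        rw [hγeq, ← Finset.add_sum_erase _ _ hiN]
      refine ⟨fun j => if j = i then (γ i)⁻¹ else -(γ j) * (γ i)⁻¹, ?_, ?_, ?_⟩
      · intro j hj
        beta_reduce
        by_cases hji : j = i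
        · rw [if_pos hji]; positivity
        · rw [if_neg hji]
          have hj' : j ∈ N.erase i := Finset.mem_erase.mpr ⟨hji, hj⟩
          have := hγ0 j hj'
          have h2 : 0 ≤ (γ i)⁻¹ := by positivity
          nlinarith
      · rw [← Finset.add_sum_erase _ _ hiN, if_pos rfl,
          Finset.sum_congr rfl (fun j hj => if_neg (Finset.ne_of_mem_erase hj))]
        have : ∑ j ∈ N.erase i, -(γ j) * (γ i)⁻¹ = -(∑ j ∈ N.erase i, γ j) * (γ i)⁻¹ := by
          rw [← Finset.sum_mul, ← Finset.sum_neg_distrib]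
        rw [this]
        have h1 : ∑ j ∈ N.erase i, γ j = 1 - γ i := by linarith
        rw [h1]; field_simp; ring
      · beta_reduce
        rw [if_pos rfl,
          Finset.sum_congr rfl (fun j hj => by
            rw [if_neg (Finset.ne_of_mem_erase hj)] :
            ∀ j ∈ N.erase i, (if j = i then (γ i)⁻¹ else -(γ j) * (γ i)⁻¹) • p N j
              = (-(γ j) * (γ i)⁻¹) • p N j)]
        exact solve_smul (N.erase i) (p N) γ (γ i) hγi v (p N i) hγeq'
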